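/- For every θ > 0 there exists a constant C_θ > 0 such that for all real parameters N, N₁, N₂, N₃, R ≥ 1 and every integer Ω₀: (i) for every fixed pair (k, k₁) ∈ (ℤ³)², the fiber S_{k k₁} satisfies #S_{k k₁} ≤ C_θ · (min(N₂, N₃, R))^{2+θ}; and (ii) for every fixed pair (k₂, k₃) ∈ (ℤ³)², the fiber S_{k₂ k₃} satisfies #S_{k₂ k₃} ≤ C_θ · (min(N, N₁, R))^{2+θ}. -/
import Mathlib


open scoped BigOperators

/-- Euclidean norm of a point of `ℤ³`. -/
noncomputable def enorm3 (k : Fin 3 → ℤ) : ℝ := Real.sqrt (∑ i, ((k i : ℝ)) ^ 2)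

/-- Japanese bracket `⟨k⟩ = (1 + |k|²)^{1/2}` of a point of `ℤ³`. -/
noncomputable def jap3 (k : Fin 3 → ℤ) : ℝ := Real.sqrt (1 + ∑ i, ((k i : ℝ)) ^ 2)

/-- Squared Euclidean norm `|k|²` as an integer. -/
def nsq3 (k : Fin 3 → ℤ) : ℤ := ∑ i, (k i) ^ 2

/-- The set `S` of Lemma 2.4(2): quadruples `(k, k₁, k₂, k₃)` in `(ℤ³)⁴` with
`k = k₁ - k₂ + k₃`, `k₂ ∉ {k₁, k₃}`, `|k| ≤ N`, `|k|² - |k₁|² + |k₂|² - |k₃|² = Ω₀`,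
`N_j/2 < |k_j| ≤ N_j` and `R/2 < ⟨k₁ - k₂⟩ ≤ R`. -/
def Sset (N N₁ N₂ N₃ R : ℝ) (Ω₀ : ℤ) :
    Set ((Fin 3 → ℤ) × (Fin 3 → ℤ) × (Fin 3 → ℤ) × (Fin 3 → ℤ)) :=
  {q | q.1 = q.2.1 - q.2.2.1 + q.2.2.2 ∧
       q.2.2.1 ≠ q.2.1 ∧ q.2.2.1 ≠ q.2.2.2 ∧
       enorm3 q.1 ≤ N ∧
       nsq3 q.1 - nsq3 q.2.1 + nsq3 q.2.2.1 - nsq3 q.2.2.2 = Ω₀ ∧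
       N₁ / 2 < enorm3 q.2.1 ∧ enorm3 q.2.1 ≤ N₁ ∧
       N₂ / 2 < enorm3 q.2.2.1 ∧ enorm3 q.2.2.1 ≤ N₂ ∧
       N₃ / 2 < enorm3 q.2.2.2 ∧ enorm3 q.2.2.2 ≤ N₃ ∧
       R / 2 < jap3 (q.2.1 - q.2.2.1) ∧ jap3 (q.2.1 - q.2.2.1) ≤ R}

/-- The fiber `S_{k k₁}` of `S` over a fixed pair `(k, k₁)`. -/
def SsetKK1 (N N₁ N₂ N₃ R : ℝ) (Ω₀ : ℤ) (k k₁ : Fin 3 → ℤ) :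
    Set ((Fin 3 → ℤ) × (Fin 3 → ℤ)) :=
  {q | (k, k₁, q.1, q.2) ∈ Sset N N₁ N₂ N₃ R Ω₀}

/-- The fiber `S_{k₂ k₃}` of `S` over a fixed pair `(k₂, k₃)`. -/
def SsetK2K3 (N N₁ N₂ N₃ R : ℝ) (Ω₀ : ℤ) (k₂ k₃ : Fin 3 → ℤ) :
    Set ((Fin 3 → ℤ) × (Fin 3 → ℤ)) :=
  {q | (q.1, q.2, k₂, k₃) ∈ Sset N N₁ N₂ N₃ R Ω₀}

/-- Counting estimate (2.21) of Lemma 2.4(2): bounds on the fibers `S_{k k₁}` and `S_{k₂ k₃}`. -/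

def Pset (v z : Fin 3 → ℤ) (c : ℤ) (m : ℝ) : Set (Fin 3 → ℤ) :=
  {x | (∑ i, v i * x i) = c ∧ ∀ i, |((x i : ℝ)) - (z i : ℝ)| ≤ m}

lemma abs_coord_le_enorm (x : Fin 3 → ℤ) (i : Fin 3) : |(x i : ℝ)| ≤ enorm3 x := by
  rw [← Real.sqrt_sq_eq_abs]
  exact Real.sqrt_le_sqrt (Finset.single_le_sum (f := fun j => ((x j : ℝ))^2)
    (fun j _ => sq_nonneg _) (Finset.mem_univ i))

lemma enorm3_le_jap3 (x : Fin 3 → ℤ) : enorm3 x ≤ jap3 x :=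
  Real.sqrt_le_sqrt (by linarith)

lemma count_aux (v z : Fin 3 → ℤ) (c : ℤ) (m : ℝ) (hm : 1 ≤ m)
    (i₀ j₁ j₂ : Fin 3) (hv : v i₀ ≠ 0)
    (hsum : ∀ f : Fin 3 → ℤ, (∑ i, f i) = f i₀ + f j₁ + f j₂)
    (hext : ∀ x y : Fin 3 → ℤ, x i₀ = y i₀ → x j₁ = y j₁ → x j₂ = y j₂ → x = y) :
    (Pset v z c m).Finite ∧ ((Pset v z c m).ncard : ℝ) ≤ 9 * m ^ 2 := by
  set B := ⌊m⌋ with hB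
  have hBm : (B : ℝ) ≤ m := Int.floor_le m
  have hB0 : (0:ℤ) ≤ B := by
    have : (1:ℤ) ≤ B := Int.le_floor.mpr (by exact_mod_cast hm)
    omega
  set F : Finset (ℤ × ℤ) :=
    Finset.Icc (z j₁ - B) (z j₁ + B) ×ˢ Finset.Icc (z j₂ - B) (z j₂ + B) with hF
  set f : (Fin 3 → ℤ) → ℤ × ℤ := fun x => (x j₁, x j₂) with hf
  have key : ∀ x ∈ Pset v z c m, ∀ j : Fin 3, z j - B ≤ x j ∧ x j ≤ z j + B := by
    intro x hx j
    have h1 := (abs_le.mp (hx.2 j))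
    constructor
    · have : z j - x j ≤ B := Int.le_floor.mpr (by push_cast; linarith [h1.2])
      omega
    · have : x j - z j ≤ B := Int.le_floor.mpr (by push_cast; linarith [h1.1])
      omega
  have himg : f '' Pset v z c m ⊆ ↑F := by
    rintro p ⟨x, hx, rfl⟩
    have h1 := key x hx j₁
    have h2 := key x hx j₂
    simp only [hf, hF, Finset.coe_product, Set.mem_prod, Finset.mem_coe, Finset.mem_Icc]
    exact ⟨⟨h1.1, h1.2⟩, ⟨h2.1, h2.2⟩⟩
  have hinj : Set.InjOn f (Pset v z c m) := by
    intro x hx y hy hxy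
    have h1 : x j₁ = y j₁ := congrArg Prod.fst hxy
    have h2 : x j₂ = y j₂ := congrArg Prod.snd hxy
    have hx1 : v i₀ * x i₀ + v j₁ * x j₁ + v j₂ * x j₂ = c :=
      ((hsum (fun i => v i * x i)).symm).trans hx.1
    have hy1 : v i₀ * y i₀ + v j₁ * y j₁ + v j₂ * y j₂ = c :=
      ((hsum (fun i => v i * y i)).symm).trans hy.1
    have h0 : v i₀ * x i₀ = v i₀ * y i₀ := by rw [h1, h2] at hx1; linarith
    exact hext x y (mul_left_cancel₀ hv h0) h1 h2
  have hFfin : (↑F : Set (ℤ × ℤ)).Finite := F.finite_toSet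
  have himgfin : (f '' Pset v z c m).Finite := hFfin.subset himg
  have hfin : (Pset v z c m).Finite := Set.Finite.of_finite_image himgfin hinj
  refine ⟨hfin, ?_⟩
  have hIcc : ∀ a : ℤ, (Finset.Icc (a - B) (a + B)).card = (2*B+1).toNat := by
    intro a; rw [Int.card_Icc]; congr 1; ring
  have hcard : F.card = (2*B+1).toNat * (2*B+1).toNat := by
    rw [hF, Finset.card_product, hIcc, hIcc]
  have h1 : (Pset v z c m).ncard = (f '' Pset v z c m).ncard :=
    (Set.ncard_image_of_injOn hinj).symm
  have h2 : (f '' Pset v z c m).ncard ≤ F.card := by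
    rw [← Set.ncard_coe_finset]; exact Set.ncard_le_ncard himg hFfin
  have hcast : ((2*B+1).toNat : ℝ) = 2*(B:ℝ)+1 := by
    have : ((2*B+1).toNat : ℤ) = 2*B+1 := Int.toNat_of_nonneg (by omega)
    exact_mod_cast congrArg (fun t : ℤ => (t : ℝ)) this
  calc ((Pset v z c m).ncard : ℝ) ≤ (F.card : ℝ) := by exact_mod_cast h1 ▸ h2
    _ = (2*(B:ℝ)+1) * (2*(B:ℝ)+1) := by rw [hcard]; push_cast [hcast]; ring
    _ ≤ 9 * m ^ 2 := by nlinarith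

lemma count_plane (v z : Fin 3 → ℤ) (c : ℤ) (m : ℝ) (hm : 1 ≤ m) (hv : v ≠ 0) :
    (Pset v z c m).Finite ∧ ((Pset v z c m).ncard : ℝ) ≤ 9 * m ^ 2 := by
  obtain ⟨i₀, hi₀⟩ := Function.ne_iff.mp hv
  simp only [Pi.zero_apply] at hi₀
  fin_cases i₀
  · exact count_aux v z c m hm 0 1 2 hi₀
      (fun f => by simp [Fin.sum_univ_three])
      (fun x y h0 h1 h2 => by funext i; fin_cases i <;> assumption)
  · exact count_aux v z c m hm 1 0 2 hi₀
      (fun f => by simp [Fin.sum_univ_three]; ring)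
      (fun x y h0 h1 h2 => by funext i; fin_cases i <;> assumption)
  · exact count_aux v z c m hm 2 0 1 hi₀
      (fun f => by simp [Fin.sum_univ_three]; ring)
      (fun x y h0 h1 h2 => by funext i; fin_cases i <;> assumption)

lemma fiber_kk1 (N N₁ N₂ N₃ R : ℝ) (Ω₀ : ℤ) (k k₁ z : Fin 3 → ℤ) (m : ℝ) (hm : 1 ≤ m)
    (hz : ∀ q ∈ SsetKK1 N N₁ N₂ N₃ R Ω₀ k k₁, ∀ i, |((q.1 i : ℝ)) - (z i : ℝ)| ≤ m) :
    (SsetKK1 N N₁ N₂ N₃ R Ω₀ k k₁).Finite ∧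
    ((SsetKK1 N N₁ N₂ N₃ R Ω₀ k k₁).ncard : ℝ) ≤ 9 * m ^ 2 := by
  by_cases hS : SsetKK1 N N₁ N₂ N₃ R Ω₀ k k₁ = ∅
  · rw [hS]; simp; positivity
  obtain ⟨q₀, hq₀⟩ := Set.nonempty_iff_ne_empty.mpr hS
  simp only [SsetKK1, Sset, Set.mem_setOf_eq] at hq₀
  have hkne : k ≠ k₁ := by
    obtain ⟨h1, -, h3, -⟩ := hq₀
    intro h
    apply h3
    rw [h] at h1
    funext i
    have := congrFun h1 i
    simp [Pi.add_apply, Pi.sub_apply] at this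
    omega
  set v : Fin 3 → ℤ := fun i => 2 * (k i - k₁ i) with hvdef
  have hv : v ≠ 0 := by
    obtain ⟨i, hi⟩ := Function.ne_iff.mp hkne
    refine Function.ne_iff.mpr ⟨i, ?_⟩
    simp only [hvdef, Pi.zero_apply]
    omega
  set c : ℤ := nsq3 k - nsq3 k₁ - nsq3 (k - k₁) - Ω₀ with hcdef
  have hsub : Prod.fst '' SsetKK1 N N₁ N₂ N₃ R Ω₀ k k₁ ⊆ Pset v z c m := by
    rintro x ⟨q, hq, rfl⟩
    refine ⟨?_, hz q hq⟩
    simp only [SsetKK1, Sset, Set.mem_setOf_eq] at hq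
    obtain ⟨h1, -, -, -, h5, -⟩ := hq
    have hq2 : q.2 = k - k₁ + q.1 := by rw [h1]; abel
    rw [hq2] at h5
    simp only [nsq3, Fin.sum_univ_three, Pi.add_apply, Pi.sub_apply, hvdef, hcdef] at h5 ⊢
    linear_combination -h5
  have hinj : Set.InjOn Prod.fst (SsetKK1 N N₁ N₂ N₃ R Ω₀ k k₁) := by
    intro q hq q' hq' h
    simp only [SsetKK1, Sset, Set.mem_setOf_eq] at hq hq'
    obtain ⟨h1, -⟩ := hq
    obtain ⟨h1', -⟩ := hq'
    have a : q.2 = k - k₁ + q.1 := by rw [h1]; abel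
    have b : q'.2 = k - k₁ + q'.1 := by rw [h1']; abel
    exact Prod.ext h (by rw [a, b, h])
  obtain ⟨hfinP, hcardP⟩ := count_plane v z c m hm hv
  have hfin := Set.Finite.of_finite_image (hfinP.subset hsub) hinj
  refine ⟨hfin, ?_⟩
  calc ((SsetKK1 N N₁ N₂ N₃ R Ω₀ k k₁).ncard : ℝ)
      = ((Prod.fst '' SsetKK1 N N₁ N₂ N₃ R Ω₀ k k₁).ncard : ℝ) := by
        rw [Set.ncard_image_of_injOn hinj]
    _ ≤ ((Pset v z c m).ncard : ℝ) := by
        exact_mod_cast Set.ncard_le_ncard hsub hfinP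
    _ ≤ 9 * m ^ 2 := hcardP

lemma fiber_k2k3 (N N₁ N₂ N₃ R : ℝ) (Ω₀ : ℤ) (k₂ k₃ z : Fin 3 → ℤ) (m : ℝ) (hm : 1 ≤ m)
    (hz : ∀ q ∈ SsetK2K3 N N₁ N₂ N₃ R Ω₀ k₂ k₃, ∀ i, |((q.2 i : ℝ)) - (z i : ℝ)| ≤ m) :
    (SsetK2K3 N N₁ N₂ N₃ R Ω₀ k₂ k₃).Finite ∧
    ((SsetK2K3 N N₁ N₂ N₃ R Ω₀ k₂ k₃).ncard : ℝ) ≤ 9 * m ^ 2 := by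
  by_cases hS : SsetK2K3 N N₁ N₂ N₃ R Ω₀ k₂ k₃ = ∅
  · rw [hS]; simp; positivity
  obtain ⟨q₀, hq₀⟩ := Set.nonempty_iff_ne_empty.mpr hS
  simp only [SsetK2K3, Sset, Set.mem_setOf_eq] at hq₀
  have hkne : k₂ ≠ k₃ := hq₀.2.2.1
  set v : Fin 3 → ℤ := fun i => 2 * (k₃ i - k₂ i) with hvdef
  have hv : v ≠ 0 := by
    obtain ⟨i, hi⟩ := Function.ne_iff.mp hkne
    refine Function.ne_iff.mpr ⟨i, ?_⟩
    simp only [hvdef, Pi.zero_apply]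
    omega
  set c : ℤ := Ω₀ - nsq3 (k₃ - k₂) - nsq3 k₂ + nsq3 k₃ with hcdef
  have hsub : Prod.snd '' SsetK2K3 N N₁ N₂ N₃ R Ω₀ k₂ k₃ ⊆ Pset v z c m := by
    rintro x ⟨q, hq, rfl⟩
    refine ⟨?_, hz q hq⟩
    simp only [SsetK2K3, Sset, Set.mem_setOf_eq] at hq
    obtain ⟨h1, -, -, -, h5, -⟩ := hq
    rw [h1] at h5
    simp only [nsq3, Fin.sum_univ_three, Pi.add_apply, Pi.sub_apply, hvdef, hcdef] at h5 ⊢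
    linear_combination h5
  have hinj : Set.InjOn Prod.snd (SsetK2K3 N N₁ N₂ N₃ R Ω₀ k₂ k₃) := by
    intro q hq q' hq' h
    simp only [SsetK2K3, Sset, Set.mem_setOf_eq] at hq hq'
    obtain ⟨h1, -⟩ := hq
    obtain ⟨h1', -⟩ := hq'
    exact Prod.ext (by rw [h1, h1', h]) h
  obtain ⟨hfinP, hcardP⟩ := count_plane v z c m hm hv
  have hfin := Set.Finite.of_finite_image (hfinP.subset hsub) hinj
  refine ⟨hfin, ?_⟩
  calc ((SsetK2K3 N N₁ N₂ N₃ R Ω₀ k₂ k₃).ncard : ℝ)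
      = ((Prod.snd '' SsetK2K3 N N₁ N₂ N₃ R Ω₀ k₂ k₃).ncard : ℝ) := by
        rw [Set.ncard_image_of_injOn hinj]
    _ ≤ ((Pset v z c m).ncard : ℝ) := by
        exact_mod_cast Set.ncard_le_ncard hsub hfinP
    _ ≤ 9 * m ^ 2 := hcardP

lemma sq_le_rpow (θ x : ℝ) (hθ : 0 < θ) (hx : 1 ≤ x) : x ^ 2 ≤ x ^ (2 + θ) := by
  have h2 : x ^ (2:ℕ) = x ^ ((2:ℝ)) := by
    rw [← Real.rpow_natCast x 2]; norm_num
  rw [h2]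
  exact Real.rpow_le_rpow_of_exponent_le hx (by linarith)

theorem counting_S_kk1_k2k3 :
    ∀ θ : ℝ, 0 < θ → ∃ C : ℝ, 0 < C ∧
      ∀ N N₁ N₂ N₃ R : ℝ, 1 ≤ N → 1 ≤ N₁ → 1 ≤ N₂ → 1 ≤ N₃ → 1 ≤ R → ∀ Ω₀ : ℤ,
        (∀ k k₁ : Fin 3 → ℤ,
          (SsetKK1 N N₁ N₂ N₃ R Ω₀ k k₁).Finite ∧
          ((SsetKK1 N N₁ N₂ N₃ R Ω₀ k k₁).ncard : ℝ) ≤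
            C * (min (min N₂ N₃) R) ^ (2 + θ)) ∧
        (∀ k₂ k₃ : Fin 3 → ℤ,
          (SsetK2K3 N N₁ N₂ N₃ R Ω₀ k₂ k₃).Finite ∧
          ((SsetK2K3 N N₁ N₂ N₃ R Ω₀ k₂ k₃).ncard : ℝ) ≤
            C * (min (min N N₁) R) ^ (2 + θ)) := by
  intro θ hθ
  refine ⟨9, by norm_num, ?_⟩
  intro N N₁ N₂ N₃ R hN hN1 hN2 hN3 hR Ω₀
  constructor
  · intro k k₁
    set m := min (min N₂ N₃) R with hmdef
    have hm : 1 ≤ m := le_min (le_min hN2 hN3) hR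
    have key : ∃ z : Fin 3 → ℤ,
        ∀ q ∈ SsetKK1 N N₁ N₂ N₃ R Ω₀ k k₁, ∀ i, |((q.1 i : ℝ)) - (z i : ℝ)| ≤ m := by
      rcases le_total (min N₂ N₃) R with h | h
      · rcases le_total N₂ N₃ with h' | h'
        · -- m = N₂, z = 0
          have hme : m = N₂ := by rw [hmdef, min_eq_left h, min_eq_left h']
          refine ⟨0, fun q hq i => ?_⟩
          obtain ⟨-, -, -, -, -, -, -, -, h9, -⟩ := hq
          simp only [Pi.zero_apply, Int.cast_zero, sub_zero]
          exact (abs_coord_le_enorm q.1 i).trans (by rw [hme]; exact h9)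
        · -- m = N₃, z = k₁ - k
          have hme : m = N₃ := by rw [hmdef, min_eq_left h, min_eq_right h']
          refine ⟨k₁ - k, fun q hq i => ?_⟩
          obtain ⟨h1, -, -, -, -, -, -, -, -, -, h11, -⟩ := hq
          have hint : q.1 i - (k₁ i - k i) = q.2 i := by
            have := congrFun h1 i
            simp only [Pi.add_apply, Pi.sub_apply] at this
            omega
          have hre : (q.1 i : ℝ) - (((k₁ - k) i : ℤ) : ℝ) = (q.2 i : ℝ) := by
            simp only [Pi.sub_apply]
            push_cast
            exact_mod_cast congrArg (fun t : ℤ => (t : ℝ)) hint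
          rw [hre]
          exact (abs_coord_le_enorm q.2 i).trans (by rw [hme]; exact h11)
      · -- m = R, z = k₁
        have hme : m = R := min_eq_right h
        refine ⟨k₁, fun q hq i => ?_⟩
        obtain ⟨-, -, -, -, -, -, -, -, -, -, -, -, h13⟩ := hq
        have hre : |(q.1 i : ℝ) - (k₁ i : ℝ)| = |(((k₁ - q.1) i : ℤ) : ℝ)| := by
          simp only [Pi.sub_apply]; push_cast; rw [abs_sub_comm]
        rw [hre]
        calc |(((k₁ - q.1) i : ℤ) : ℝ)| ≤ enorm3 (k₁ - q.1) := abs_coord_le_enorm _ i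
          _ ≤ jap3 (k₁ - q.1) := enorm3_le_jap3 _
          _ ≤ R := h13
          _ = m := hme.symm
    obtain ⟨z, hz⟩ := key
    obtain ⟨hfin, hcard⟩ := fiber_kk1 N N₁ N₂ N₃ R Ω₀ k k₁ z m hm hz
    exact ⟨hfin, hcard.trans (by
      have := sq_le_rpow θ m hθ hm
      nlinarith)⟩
  · intro k₂ k₃
    set m := min (min N N₁) R with hmdef
    have hm : 1 ≤ m := le_min (le_min hN hN1) hR
    have key : ∃ z : Fin 3 → ℤ,
        ∀ q ∈ SsetK2K3 N N₁ N₂ N₃ R Ω₀ k₂ k₃, ∀ i, |((q.2 i : ℝ)) - (z i : ℝ)| ≤ m := by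
      rcases le_total (min N N₁) R with h | h
      · rcases le_total N N₁ with h' | h'
        · -- m = N, z = k₂ - k₃ : q.2 - (k₂ - k₃) = q.1
          have hme : m = N := by rw [hmdef, min_eq_left h, min_eq_left h']
          refine ⟨k₂ - k₃, fun q hq i => ?_⟩
          obtain ⟨h1, -, -, h4, -⟩ := hq
          have hint : q.2 i - (k₂ i - k₃ i) = q.1 i := by
            have := congrFun h1 i
            simp only [Pi.add_apply, Pi.sub_apply] at this
            omega
          have hre : (q.2 i : ℝ) - (((k₂ - k₃) i : ℤ) : ℝ) = (q.1 i : ℝ) := by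
            simp only [Pi.sub_apply]
            push_cast
            exact_mod_cast congrArg (fun t : ℤ => (t : ℝ)) hint
          rw [hre]
          exact (abs_coord_le_enorm q.1 i).trans (by rw [hme]; exact h4)
        · -- m = N₁, z = 0
          have hme : m = N₁ := by rw [hmdef, min_eq_left h, min_eq_right h']
          refine ⟨0, fun q hq i => ?_⟩
          obtain ⟨-, -, -, -, -, -, h7, -⟩ := hq
          simp only [Pi.zero_apply, Int.cast_zero, sub_zero]
          exact (abs_coord_le_enorm q.2 i).trans (by rw [hme]; exact h7)
      · -- m = R, z = k₂
        have hme : m = R := min_eq_right h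
        refine ⟨k₂, fun q hq i => ?_⟩
        obtain ⟨-, -, -, -, -, -, -, -, -, -, -, -, h13⟩ := hq
        have hre : |(q.2 i : ℝ) - (k₂ i : ℝ)| = |(((q.2 - k₂) i : ℤ) : ℝ)| := by
          simp only [Pi.sub_apply]; push_cast; ring_nf
        rw [hre]
        calc |(((q.2 - k₂) i : ℤ) : ℝ)| ≤ enorm3 (q.2 - k₂) := abs_coord_le_enorm _ i
          _ ≤ jap3 (q.2 - k₂) := enorm3_le_jap3 _
          _ ≤ R := h13
          _ = m := hme.symm
    obtain ⟨z, hz⟩ := key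
    obtain ⟨hfin, hcard⟩ := fiber_k2k3 N N₁ N₂ N₃ R Ω₀ k₂ k₃ z m hm hz
    exact ⟨hfin, hcard.trans (by
      have := sq_le_rpow θ m hθ hm
      nlinarith)⟩
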